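/- arXiv:2103.12690 — 5 statements merged into one kernel-verified Lean document; each statement's English description precedes it below -/
import Mathlib

section
/- For any real γ > 0 and positive integers d and m with m ≤ exp(γ²·d/8), there exist m unit vectors v₁, …, v_m in ℝ^d (Euclidean space with the standard inner product) such that for all i ≠ j in {1, …, m}, |⟨v_i, v_j⟩| ≤ γ. -/
open Finset Real

namespace JLAux

/-- sign of a boolean as a real number -/
def sgn (b : Bool) : ℝ := if b then 1 else -1

lemma sgn_sq (b : Bool) : sgn b * sgn b = 1 := by cases b <;> simp [sgn]

lemma sgn_not (b : Bool) : sgn (!b) = -sgn b := by cases b <;> simp [sgn]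

lemma abs_sgn (b : Bool) : |sgn b| = 1 := by cases b <;> simp [sgn]

variable {d : ℕ}

/-- inner product of sign vectors -/
def S (x y : Fin d → Bool) : ℝ := ∑ i, sgn (x i) * sgn (y i)

lemma S_comm (x y : Fin d → Bool) : S x y = S y x := by
  unfold S; exact Finset.sum_congr rfl fun i _ => mul_comm _ _

lemma S_self (x : Fin d → Bool) : S x x = d := by
  unfold S; simp [sgn_sq]

lemma mgf (y : Fin d → Bool) (t : ℝ) :
    ∑ x : Fin d → Bool, Real.exp (t * S x y) = (2 * Real.cosh t) ^ d := by
  have h1 : ∀ x : Fin d → Bool, Real.exp (t * S x y)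
      = ∏ i, Real.exp (t * (sgn (x i) * sgn (y i))) := by
    intro x
    rw [← Real.exp_sum, ← Finset.mul_sum]
    rfl
  simp_rw [h1]
  rw [← Fintype.prod_sum (fun i b => Real.exp (t * (sgn b * sgn (y i))))]
  have h2 : ∀ i : Fin d, ∑ b : Bool, Real.exp (t * (sgn b * sgn (y i)))
      = 2 * Real.cosh t := by
    intro i
    rw [Fintype.sum_bool]
    cases h : y i <;>
      simp [sgn, Real.cosh_eq, mul_comm] <;> ring
  rw [Finset.prod_congr rfl fun i _ => h2 i, Finset.prod_const, Finset.card_univ,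
    Fintype.card_fin]

lemma tail_one_sided (y : Fin d → Bool) (t s : ℝ) (ht : 0 ≤ t) :
    ((univ.filter (fun x : Fin d → Bool => s ≤ S x y)).card : ℝ)
      ≤ Real.exp (-t * s) * (2 * Real.cosh t) ^ d := by
  have key : ((univ.filter (fun x : Fin d → Bool => s ≤ S x y)).card : ℝ) * Real.exp (t * s)
      ≤ ∑ x : Fin d → Bool, Real.exp (t * S x y) := by
    calc ((univ.filter (fun x : Fin d → Bool => s ≤ S x y)).card : ℝ) * Real.exp (t * s)
        = ∑ _x ∈ univ.filter (fun x : Fin d → Bool => s ≤ S x y), Real.exp (t * s) := by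
          rw [Finset.sum_const, nsmul_eq_mul]
      _ ≤ ∑ x ∈ univ.filter (fun x : Fin d → Bool => s ≤ S x y), Real.exp (t * S x y) := by
          apply Finset.sum_le_sum
          intro x hx
          exact Real.exp_le_exp.2 (mul_le_mul_of_nonneg_left (mem_filter.1 hx).2 ht)
      _ ≤ ∑ x : Fin d → Bool, Real.exp (t * S x y) :=
          Finset.sum_le_sum_of_subset_of_nonneg (Finset.filter_subset _ _)
            (fun _ _ _ => (Real.exp_pos _).le)
  rw [mgf y t] at key
  rw [neg_mul, Real.exp_neg, inv_mul_eq_div, le_div_iff₀ (Real.exp_pos _)]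
  exact key


lemma card_neg_eq (y : Fin d → Bool) (s : ℝ) :
    (univ.filter (fun x : Fin d → Bool => s ≤ -S x y)).card
      = (univ.filter (fun x : Fin d → Bool => s ≤ S x y)).card := by
  apply Finset.card_bij (fun x _ => fun i => !x i)
  · intro x hx
    simp only [mem_filter, mem_univ, true_and] at hx ⊢
    have : S (fun i => !x i) y = -S x y := by
      unfold S; rw [← Finset.sum_neg_distrib]
      exact Finset.sum_congr rfl fun i _ => by rw [sgn_not]; ring
    rw [this]; exact hx
  · intro a _ b _ h
    funext i
    have := congrFun h i
    simpa using this
  · intro x hx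
    refine ⟨fun i => !x i, ?_, by funext i; simp⟩
    simp only [mem_filter, mem_univ, true_and] at hx ⊢
    have : S (fun i => !x i) y = -S x y := by
      unfold S; rw [← Finset.sum_neg_distrib]
      exact Finset.sum_congr rfl fun i _ => by rw [sgn_not]; ring
    rw [this]; linarith [hx]

lemma tail_two_sided (y : Fin d → Bool) (t s : ℝ) (ht : 0 ≤ t) :
    ((univ.filter (fun x : Fin d → Bool => s ≤ |S x y|)).card : ℝ)
      ≤ 2 * (Real.exp (-t * s) * (2 * Real.cosh t) ^ d) := by
  have hsub : (univ.filter (fun x : Fin d → Bool => s ≤ |S x y|))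
      ⊆ (univ.filter (fun x : Fin d → Bool => s ≤ S x y))
        ∪ (univ.filter (fun x : Fin d → Bool => s ≤ -S x y)) := by
    intro x hx
    simp only [mem_filter, mem_univ, true_and, mem_union] at hx ⊢
    rcases abs_cases (S x y) with ⟨h1, _⟩ | ⟨h1, _⟩
    · left; rwa [h1] at hx
    · right; rwa [h1] at hx
  calc ((univ.filter (fun x : Fin d → Bool => s ≤ |S x y|)).card : ℝ)
      ≤ ((univ.filter (fun x : Fin d → Bool => s ≤ S x y)).card : ℝ)
        + ((univ.filter (fun x : Fin d → Bool => s ≤ -S x y)).card : ℝ) := by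
        rw [← Nat.cast_add]
        exact_mod_cast le_trans (Nat.cast_le.2 (Finset.card_le_card hsub))
          (Nat.cast_le.2 (Finset.card_union_le _ _))
    _ = 2 * ((univ.filter (fun x : Fin d → Bool => s ≤ S x y)).card : ℝ) := by
        rw [card_neg_eq]; ring
    _ ≤ 2 * (Real.exp (-t * s) * (2 * Real.cosh t) ^ d) := by
        have := tail_one_sided y t s ht
        linarith

lemma greedy (γ : ℝ) (hγ : 0 < γ) (d m : ℕ) (hd : 0 < d)
    (hmle : (m : ℝ) ≤ Real.exp (γ ^ 2 * d / 8)) :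
    ∀ k, k ≤ m → ∃ v : Fin k → (Fin d → Bool),
      ∀ i j, i ≠ j → |S (v i) (v j)| ≤ γ * d := by
  intro k
  induction k with
  | zero => exact fun _ => ⟨Fin.elim0, fun i => i.elim0⟩
  | succ k ih =>
    intro hk1
    obtain ⟨v, hv⟩ := ih (le_trans (Nat.le_succ k) hk1)
    -- bad set
    set B : Finset (Fin d → Bool) :=
      univ.filter (fun x => ∃ i : Fin k, γ * d ≤ |S x (v i)|) with hB
    have hcardB : (B.card : ℝ) < (2 : ℝ) ^ d := by
      have hsub : B ⊆ univ.biUnion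
          (fun i : Fin k => univ.filter (fun x : Fin d → Bool => γ * d ≤ |S x (v i)|)) := by
        intro x hx
        simp only [hB, mem_filter, mem_univ, true_and] at hx
        obtain ⟨i, hi⟩ := hx
        exact Finset.mem_biUnion.2 ⟨i, mem_univ i, by simp [hi]⟩
      have hbound : (B.card : ℝ)
          ≤ k * (2 * (Real.exp (-γ * (γ * d)) * (2 * Real.cosh γ) ^ d)) := by
        calc (B.card : ℝ) ≤ ((univ.biUnion
            (fun i : Fin k => univ.filter (fun x : Fin d → Bool =>
              γ * d ≤ |S x (v i)|))).card : ℝ) := Nat.cast_le.2 (Finset.card_le_card hsub)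
          _ ≤ ∑ i : Fin k, ((univ.filter (fun x : Fin d → Bool =>
              γ * d ≤ |S x (v i)|)).card : ℝ) := by
              rw [← Nat.cast_sum]
              exact Nat.cast_le.2 (Finset.card_biUnion_le)
          _ ≤ ∑ _i : Fin k, 2 * (Real.exp (-γ * (γ * d)) * (2 * Real.cosh γ) ^ d) :=
              Finset.sum_le_sum fun i _ => tail_two_sided (v i) γ (γ * d) hγ.le
          _ = k * (2 * (Real.exp (-γ * (γ * d)) * (2 * Real.cosh γ) ^ d)) := by
              rw [Finset.sum_const, Finset.card_univ, Fintype.card_fin, nsmul_eq_mul]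
      have hcosh : (2 * Real.cosh γ) ^ d ≤ (2:ℝ) ^ d * Real.exp (γ ^ 2 * d / 2) := by
        calc (2 * Real.cosh γ) ^ d ≤ (2 * Real.exp (γ ^ 2 / 2)) ^ d := by
              apply pow_le_pow_left₀ (by positivity)
              have := Real.cosh_le_exp_half_sq γ
              linarith
          _ = (2:ℝ) ^ d * Real.exp (γ ^ 2 / 2) ^ d := mul_pow _ _ _
          _ = (2:ℝ) ^ d * Real.exp (γ ^ 2 * d / 2) := by
              rw [← Real.exp_nat_mul]
              congr 1
              ring
      have hexp : Real.exp (-γ * (γ * d)) = Real.exp (-(γ ^ 2 * d)) := by ring_nf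
      have hfac : k * (2 * Real.exp (-(γ ^ 2 * d / 2))) < 1 := by
        rcases Nat.eq_zero_or_pos k with hk0 | hkpos
        · subst hk0; simp
        · have hm2 : (2:ℝ) ≤ Real.exp (γ ^ 2 * d / 8) := by
            have : (2:ℝ) ≤ (k + 1 : ℕ) := by exact_mod_cast Nat.succ_le_succ hkpos
            calc (2:ℝ) ≤ (k + 1 : ℕ) := this
              _ ≤ m := by exact_mod_cast hk1
              _ ≤ _ := hmle
          have hklt : (2:ℝ) * k < Real.exp (γ ^ 2 * d / 2) := by
            have h1 : (k:ℝ) < m := by exact_mod_cast hk1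
            calc (2:ℝ) * k < 2 * m := by linarith
              _ ≤ Real.exp (γ ^ 2 * d / 8) * Real.exp (γ ^ 2 * d / 8) :=
                  mul_le_mul hm2 hmle (by positivity) (Real.exp_pos _).le
              _ = Real.exp (γ ^ 2 * d / 4) := by rw [← Real.exp_add]; ring_nf
              _ ≤ Real.exp (γ ^ 2 * d / 2) := by
                  apply Real.exp_le_exp.2
                  have : (0:ℝ) ≤ γ ^ 2 * d := by positivity
                  linarith
          have : k * (2 * Real.exp (-(γ ^ 2 * d / 2)))
              = (2 * k) * Real.exp (-(γ ^ 2 * d / 2)) := by ring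
          rw [this, Real.exp_neg]
          rw [mul_inv_lt_iff₀ (Real.exp_pos _), one_mul]
          exact hklt
      calc (B.card : ℝ)
          ≤ k * (2 * (Real.exp (-γ * (γ * d)) * (2 * Real.cosh γ) ^ d)) := hbound
        _ ≤ k * (2 * (Real.exp (-(γ ^ 2 * d)) * ((2:ℝ) ^ d * Real.exp (γ ^ 2 * d / 2)))) := by
            apply mul_le_mul_of_nonneg_left _ (Nat.cast_nonneg k)
            apply mul_le_mul_of_nonneg_left _ (by norm_num)
            rw [hexp]
            exact mul_le_mul_of_nonneg_left hcosh (Real.exp_pos _).le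
        _ = (k * (2 * (Real.exp (-(γ ^ 2 * d)) * Real.exp (γ ^ 2 * d / 2)))) * (2:ℝ) ^ d := by
            ring
        _ = (k * (2 * Real.exp (-(γ ^ 2 * d / 2)))) * (2:ℝ) ^ d := by
            rw [← Real.exp_add]
            have heq : -(γ ^ 2 * (d:ℝ)) + γ ^ 2 * d / 2 = -(γ ^ 2 * d / 2) := by ring
            rw [heq]
        _ < 1 * (2:ℝ) ^ d := by
            apply mul_lt_mul_of_pos_right hfac (by positivity)
        _ = (2:ℝ) ^ d := one_mul _
    -- pick a good point
    have hBne : B ≠ univ := by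
      intro h
      rw [h, Finset.card_univ] at hcardB
      simp only [Fintype.card_pi, Fintype.card_bool, Finset.prod_const, Finset.card_univ,
        Fintype.card_fin] at hcardB
      push_cast at hcardB
      linarith
    obtain ⟨x, hx⟩ : ∃ x : Fin d → Bool, x ∉ B := by
      by_contra h
      push_neg at h
      exact hBne (Finset.eq_univ_iff_forall.2 h)
    have hxgood : ∀ i : Fin k, |S x (v i)| < γ * d := by
      intro i
      simp only [hB, mem_filter, mem_univ, true_and, not_exists, not_le] at hx
      exact hx i
    refine ⟨Fin.snoc v x, fun i j hij => ?_⟩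
    induction i using Fin.lastCases with
    | last =>
      induction j using Fin.lastCases with
      | last => exact absurd rfl hij
      | cast j' =>
        rw [Fin.snoc_last, Fin.snoc_castSucc]
        exact (hxgood j').le
    | cast i' =>
      induction j using Fin.lastCases with
      | last =>
        rw [Fin.snoc_last, Fin.snoc_castSucc, S_comm]
        exact (hxgood i').le
      | cast j' =>
        rw [Fin.snoc_castSucc, Fin.snoc_castSucc]
        exact hv i' j' (fun h => hij (by rw [h]))

end JLAux

/-- **Johnson–Lindenstrauss type lemma.** For any real `γ > 0` and positive integers `d`, `m`
with `m ≤ exp (γ² * d / 8)`, there exist `m` unit vectors in `ℝ^d` whose pairwise inner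
products are at most `γ` in absolute value. -/
theorem johnson_lindenstrauss_near_orthogonal
    (γ : ℝ) (hγ : 0 < γ) (d m : ℕ) (hd : 0 < d) (hm : 0 < m)
    (hmle : (m : ℝ) ≤ Real.exp (γ ^ 2 * d / 8)) :
    ∃ v : Fin m → EuclideanSpace ℝ (Fin d),
      (∀ i, ‖v i‖ = 1) ∧
      ∀ i j, i ≠ j → |(inner ℝ (v i) (v j) : ℝ)| ≤ γ := by
  obtain ⟨w, hw⟩ := JLAux.greedy γ hγ d m hd hmle m le_rfl
  have hd' : (0:ℝ) < d := by exact_mod_cast hd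
  set V : Fin m → EuclideanSpace ℝ (Fin d) :=
    fun i => WithLp.toLp 2 (fun j => JLAux.sgn (w i j) / Real.sqrt d) with hV
  refine ⟨V, ?_, ?_⟩
  · intro i
    rw [EuclideanSpace.norm_eq]
    have hterm : ∀ j : Fin d, ‖V i j‖ ^ 2 = 1 / d := by
      intro j
      show ‖JLAux.sgn (w i j) / Real.sqrt d‖ ^ 2 = 1 / d
      rw [Real.norm_eq_abs, abs_div, JLAux.abs_sgn, abs_of_nonneg (Real.sqrt_nonneg _),
        div_pow, one_pow, Real.sq_sqrt hd'.le]
    simp_rw [hterm]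
    rw [Finset.sum_const, Finset.card_univ, Fintype.card_fin, nsmul_eq_mul,
      mul_one_div, div_self (ne_of_gt hd'), Real.sqrt_one]
  · intro i j hij
    have hinner : (inner ℝ (V i) (V j) : ℝ) = JLAux.S (w i) (w j) / d := by
      rw [PiLp.inner_apply]
      unfold JLAux.S
      rw [Finset.sum_div]
      apply Finset.sum_congr rfl
      intro k _
      show (inner ℝ (JLAux.sgn (w i k) / Real.sqrt d) (JLAux.sgn (w j k) / Real.sqrt d) : ℝ)
        = JLAux.sgn (w i k) * JLAux.sgn (w j k) / d
      rw [RCLike.inner_apply', conj_trivial, div_mul_div_comm, Real.mul_self_sqrt hd'.le]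
    rw [hinner, abs_div, abs_of_nonneg hd'.le, div_le_iff₀ hd']
    exact hw i j hij
end

section
/- Let S and A be finite nonempty sets, φ : S × A → ℝ^d a feature map, and for each s ∈ S let ρ_s be a probability distribution on A such that the matrix Σ_s := Σ_{a∈A} ρ_s(a)·φ(s,a)·φ(s,a)ᵀ is invertible and max_{a∈A} φ(s,a)ᵀ Σ_s⁻¹ φ(s,a) ≤ d. Let ν be a probability distribution on S and suppose the averaged covariance matrix Σ := Σ_{s∈S} ν(s)·Σ_s is invertible. Then Σ_{s∈S} ν(s) · max_{a∈A} φ(s,a)ᵀ Σ⁻¹ φ(s,a) ≤ d². -/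
open Matrix


variable {d : ℕ}

lemma my_psd_vecMulVec (x : Fin d → ℝ) : (vecMulVec x x).PosSemidef := by
  refine posSemidef_iff_dotProduct_mulVec.mpr ⟨?_, ?_⟩
  · ext i j
    simp [vecMulVec_apply, conjTranspose_apply, mul_comm]
  · intro v
    have : dotProduct (star v) ((vecMulVec x x) *ᵥ v) = (x ⬝ᵥ v) * (x ⬝ᵥ v) := by
      simp [dotProduct, mulVec, vecMulVec_apply, Finset.mul_sum, Finset.sum_mul]
      rw [Finset.sum_comm]
      apply Finset.sum_congr rfl; intro i _
      apply Finset.sum_congr rfl; intro j _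
      ring
    rw [this]
    exact mul_self_nonneg _

lemma my_trace_mul_vecMulVec (M : Matrix (Fin d) (Fin d) ℝ) (x : Fin d → ℝ) :
    (M * vecMulVec x x).trace = x ⬝ᵥ M *ᵥ x := by
  simp [Matrix.trace, Matrix.diag, Matrix.mul_apply, vecMulVec_apply, dotProduct, mulVec,
    Finset.mul_sum]
  apply Finset.sum_congr rfl; intro i _
  apply Finset.sum_congr rfl; intro j _
  ring

lemma my_psd_trace_nonneg {A : Matrix (Fin d) (Fin d) ℝ} (hA : A.PosSemidef) :
    0 ≤ A.trace := by
  have h : ∀ i, 0 ≤ A i i := by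
    intro i
    have := hA.dotProduct_mulVec_nonneg (Pi.single i 1)
    simpa [dotProduct, mulVec, Pi.single_apply, Finset.sum_ite_eq] using this
  exact Finset.sum_nonneg fun i _ => h i

lemma my_psd_trace_mul_nonneg {A B : Matrix (Fin d) (Fin d) ℝ}
    (hA : A.PosSemidef) (hB : B.PosSemidef) : 0 ≤ (A * B).trace := by
  obtain ⟨C, rfl⟩ : ∃ C : Matrix (Fin d) (Fin d) ℝ, A = star C * C := by
    open scoped MatrixOrder in
    obtain ⟨X, hX, -, hXA⟩ := CFC.exists_sqrt_of_isSelfAdjoint_of_quasispectrumRestricts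
      hA.isHermitian (QuasispectrumRestricts.nnreal_of_nonneg hA.nonneg)
    exact ⟨X, by rw [hX.star_eq, hXA]⟩
  rw [mul_assoc, trace_mul_comm]
  exact my_psd_trace_nonneg (hB.mul_mul_conjTranspose_same C)

lemma my_psd_smul {A : Matrix (Fin d) (Fin d) ℝ} (hA : A.PosSemidef) {c : ℝ} (hc : 0 ≤ c) :
    (c • A).PosSemidef := by
  refine posSemidef_iff_dotProduct_mulVec.mpr ⟨?_, ?_⟩
  · show (c • A)ᴴ = c • A
    rw [conjTranspose_smul, hA.1.eq]
    simp
  · intro v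
    have := hA.dotProduct_mulVec_nonneg v
    simp only [smul_mulVec, dotProduct_smul, smul_eq_mul]
    exact mul_nonneg hc this

lemma my_vecMulVec_quad (x v : Fin d → ℝ) :
    v ⬝ᵥ (vecMulVec x x) *ᵥ v = (x ⬝ᵥ v) * (x ⬝ᵥ v) := by
  simp [dotProduct, mulVec, vecMulVec_apply, Finset.mul_sum, Finset.sum_mul]
  apply Finset.sum_congr rfl; intro i _
  apply Finset.sum_congr rfl; intro j _
  ring

lemma my_key {K : Matrix (Fin d) (Fin d) ℝ} (hK : K.PosSemidef) (hU : IsUnit K)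
    (x : Fin d → ℝ) {D : ℝ} (hD : x ⬝ᵥ K⁻¹ *ᵥ x ≤ D) :
    (D • K - vecMulVec x x).PosSemidef := by
  have hdet : IsUnit K.det := (isUnit_iff_isUnit_det K).mp hU
  have hKinv : K * K⁻¹ = 1 := mul_nonsing_inv K hdet
  have hInvPSD : K⁻¹.PosSemidef := hK.inv
  have hc0 : 0 ≤ x ⬝ᵥ K⁻¹ *ᵥ x := by simpa using hInvPSD.dotProduct_mulVec_nonneg x
  have hD0 : 0 ≤ D := le_trans hc0 hD
  have hKt : Kᵀ = K := by
    ext i j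
    have := congrFun (congrFun hK.1.eq i) j
    simpa [conjTranspose_apply] using this
  refine posSemidef_iff_dotProduct_mulVec.mpr ⟨?_, ?_⟩
  · show _ᴴ = _
    rw [conjTranspose_sub, conjTranspose_smul, hK.1.eq, (my_psd_vecMulVec x).1.eq]
    simp
  intro v
  rw [star_trivial]
  have hQ0 : 0 ≤ v ⬝ᵥ K *ᵥ v := by simpa using hK.dotProduct_mulVec_nonneg v
  have hquad : v ⬝ᵥ (D • K - vecMulVec x x) *ᵥ v
      = D * (v ⬝ᵥ K *ᵥ v) - (x ⬝ᵥ v) * (x ⬝ᵥ v) := by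
    rw [sub_mulVec, dotProduct_sub, smul_mulVec, dotProduct_smul, my_vecMulVec_quad]
    simp
  rw [hquad]
  set c := x ⬝ᵥ K⁻¹ *ᵥ x with hc
  set p := x ⬝ᵥ v with hp
  set w := K⁻¹ *ᵥ x with hw
  have hKw : K *ᵥ w = x := by
    rw [hw, mulVec_mulVec, hKinv, one_mulVec]
  rcases eq_or_lt_of_le hc0 with hczero | hcpos
  · have hx0 : x = 0 := by
      have hw0 : K⁻¹ *ᵥ x = 0 :=
        (hInvPSD.dotProduct_mulVec_zero_iff x).mp (by simpa using hczero.symm)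
      rw [← hKw, hw, hw0, mulVec_zero]
    rw [hp, hx0]
    simp
    positivity
  · have hwKv : ∀ u : Fin d → ℝ, w ⬝ᵥ K *ᵥ u = x ⬝ᵥ u := by
      intro u
      rw [dotProduct_mulVec, ← mulVec_transpose, hKt, hKw]
    have h1 : v ⬝ᵥ K *ᵥ w = p := by rw [hKw, dotProduct_comm, hp]
    have h2 : w ⬝ᵥ K *ᵥ v = p := hwKv v
    have h3 : w ⬝ᵥ K *ᵥ w = c := by rw [hwKv w, hc, hw]
    have hexp := hK.dotProduct_mulVec_nonneg (c • v - p • w)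
    rw [star_trivial] at hexp
    simp only [mulVec_sub, mulVec_smul, dotProduct_sub, sub_dotProduct, dotProduct_smul,
      smul_dotProduct, smul_eq_mul, h1, h2, h3] at hexp
    nlinarith [hexp, hcpos, hQ0, hD, mul_le_mul_of_nonneg_right hD hQ0]

lemma my_psd_sum {ι : Type*} [Fintype ι] (f : ι → Matrix (Fin d) (Fin d) ℝ)
    (hf : ∀ i, (f i).PosSemidef) : (∑ i, f i).PosSemidef :=
  Finset.sum_induction f _ (fun a b ha hb => ha.add hb) Matrix.PosSemidef.zero
    (fun i _ => hf i)

/-- **Averaged G-optimal design bound (Lemma 4 of Ruan et al., Lemma 5 in the paper).**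
If for each state `s` the distribution `ρ s` is a G-optimal design for the feature set
`{φ(s,a)}_{a∈A}` (covariance `K s` invertible and worst-case leverage at most `d`), and
`ν` is a distribution over states with invertible averaged covariance `Kbar`, then the
`ν`-average over states of `max_a φ(s,a)ᵀ Kbar⁻¹ φ(s,a)` is at most `d²`. -/
theorem averaged_G_optimal_design_bound
    {S A : Type*} [Fintype S] [Fintype A] [Nonempty S] [Nonempty A]
    (d : ℕ) (φ : S × A → Fin d → ℝ) (ρ : S → A → ℝ) (ν : S → ℝ)
    (hρ0 : ∀ s a, 0 ≤ ρ s a) (hρ1 : ∀ s, ∑ a, ρ s a = 1)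
    (hν0 : ∀ s, 0 ≤ ν s) (hν1 : ∑ s, ν s = 1)
    (K : S → Matrix (Fin d) (Fin d) ℝ)
    (hK : ∀ s, K s = ∑ a, ρ s a • vecMulVec (φ (s, a)) (φ (s, a)))
    (hKinv : ∀ s, IsUnit (K s))
    (hGopt : ∀ s a, dotProduct (φ (s, a)) ((K s)⁻¹.mulVec (φ (s, a))) ≤ (d : ℝ))
    (Kbar : Matrix (Fin d) (Fin d) ℝ)
    (hKbar : Kbar = ∑ s, ν s • K s)
    (hKbarinv : IsUnit Kbar) :
    ∑ s, ν s *
        (Finset.univ.sup' Finset.univ_nonempty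
          (fun a : A => dotProduct (φ (s, a)) (Kbar⁻¹.mulVec (φ (s, a)))))
      ≤ (d : ℝ) ^ 2 := by
  have hKs_psd : ∀ s, (K s).PosSemidef := by
    intro s
    rw [hK s]
    exact my_psd_sum _ fun a => my_psd_smul (my_psd_vecMulVec _) (hρ0 s a)
  have hKbar_psd : Kbar.PosSemidef := by
    rw [hKbar]
    exact my_psd_sum _ fun s => my_psd_smul (hKs_psd s) (hν0 s)
  have hInv_psd : Kbar⁻¹.PosSemidef := hKbar_psd.inv
  have hdet : IsUnit Kbar.det := (isUnit_iff_isUnit_det Kbar).mp hKbarinv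
  have hmul : Kbar⁻¹ * Kbar = 1 := nonsing_inv_mul Kbar hdet
  have hbound : ∀ s a, φ (s, a) ⬝ᵥ Kbar⁻¹ *ᵥ φ (s, a) ≤ (d : ℝ) * (Kbar⁻¹ * K s).trace := by
    intro s a
    have hpsd := my_key (hKs_psd s) (hKinv s) (φ (s, a)) (hGopt s a)
    have h0 := my_psd_trace_mul_nonneg hInv_psd hpsd
    rw [Matrix.mul_sub, trace_sub, Matrix.mul_smul, trace_smul, smul_eq_mul,
      my_trace_mul_vecMulVec, sub_nonneg] at h0
    exact h0
  calc ∑ s, ν s * (Finset.univ.sup' Finset.univ_nonempty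
          (fun a : A => dotProduct (φ (s, a)) (Kbar⁻¹.mulVec (φ (s, a)))))
      ≤ ∑ s, ν s * ((d : ℝ) * (Kbar⁻¹ * K s).trace) := by
        apply Finset.sum_le_sum
        intro s _
        exact mul_le_mul_of_nonneg_left
          (Finset.sup'_le _ _ fun a _ => hbound s a) (hν0 s)
    _ = (d : ℝ) * (Kbar⁻¹ * Kbar).trace := by
        rw [hKbar, Matrix.mul_sum, trace_sum, Finset.mul_sum]
        apply Finset.sum_congr rfl
        intro s _
        rw [Matrix.mul_smul, trace_smul, smul_eq_mul]
        ring
    _ = (d : ℝ) ^ 2 := by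
        rw [hmul, trace_one]
        simp [sq]
end

section
/- Let d ≥ 1 and let X be a random vector in ℝ^d whose distribution is isotropic, i.e., E[⟨v, X⟩²] = ‖v‖² for all v ∈ ℝ^d, and (C,4)-hypercontractive for some C ≥ 1, i.e., E[⟨v, X⟩⁴] ≤ C·(E[⟨v, X⟩²])² for all v ∈ ℝ^d. Then E[‖X‖₂⁴] ≤ C·(d² + 2d)/3 ≤ C·d². -/
open MeasureTheory

private def sgn (b : Bool) : ℝ := if b then 1 else -1

private lemma sgn_sq (b : Bool) : sgn b ^ 2 = 1 := by cases b <;> simp [sgn]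

private lemma sum_bool_succ {M : Type*} [AddCommMonoid M] (d : ℕ)
    (f : (Fin (d + 1) → Bool) → M) :
    ∑ ε : Fin (d + 1) → Bool, f ε = ∑ b : Bool, ∑ ε : Fin d → Bool, f (Fin.cons b ε) := by
  rw [← (Fin.consEquiv (fun _ => Bool)).sum_comp f, Fintype.sum_prod_type]
  rfl

private lemma sign_sum_sq (d : ℕ) (x : Fin d → ℝ) :
    ∑ ε : Fin d → Bool, (∑ i, sgn (ε i) * x i) ^ 2 = 2 ^ d * ∑ i, x i ^ 2 := by
  induction d with
  | zero => simp
  | succ d ih =>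
    rw [sum_bool_succ]
    have h : ∀ b : Bool, ∀ ε : Fin d → Bool,
        (∑ i, sgn (Fin.cons (α := fun _ => Bool) b ε i) * x i)
          = sgn b * x 0 + ∑ i, sgn (ε i) * x (Fin.succ i) := by
      intro b ε
      rw [Fin.sum_univ_succ]
      simp [Fin.cons_zero, Fin.cons_succ]
    simp only [h]
    have expand : ∀ b : Bool, ∀ ε : Fin d → Bool,
        (sgn b * x 0 + ∑ i, sgn (ε i) * x (Fin.succ i)) ^ 2
          = x 0 ^ 2 + 2 * (sgn b * x 0) * (∑ i, sgn (ε i) * x (Fin.succ i))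
            + (∑ i, sgn (ε i) * x (Fin.succ i)) ^ 2 := by
      intro b ε
      cases b <;> simp [sgn] <;> try ring
    simp only [expand]
    rw [Fin.sum_univ_succ (f := fun i => x i ^ 2)]
    have hs : ∀ b : Bool, ∑ ε : Fin d → Bool,
        (x 0 ^ 2 + 2 * (sgn b * x 0) * (∑ i, sgn (ε i) * x (Fin.succ i))
          + (∑ i, sgn (ε i) * x (Fin.succ i)) ^ 2)
        = 2 ^ d * x 0 ^ 2 + 2 * (sgn b * x 0) * (∑ ε : Fin d → Bool, ∑ i, sgn (ε i) * x (Fin.succ i))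
          + 2 ^ d * ∑ i, x (Fin.succ i) ^ 2 := by
      intro b
      rw [Finset.sum_add_distrib, Finset.sum_add_distrib, Finset.sum_const,
        ← Finset.mul_sum, ih (fun i => x (Fin.succ i))]
      simp [Fintype.card_fun]
    simp only [hs]
    have hz : (∑ ε : Fin d → Bool, ∑ i, sgn (ε i) * x (Fin.succ i)) * ((sgn true : ℝ) + sgn false) = 0 := by
      simp [sgn]
    simp only [Fintype.sum_bool]
    have ht : sgn true = (1:ℝ) := rfl
    have hf : sgn false = (-1:ℝ) := rfl
    rw [ht, hf]
    ring

private lemma sign_sum_quart (d : ℕ) (x : Fin d → ℝ) :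
    ∑ ε : Fin d → Bool, (∑ i, sgn (ε i) * x i) ^ 4
      = 2 ^ d * (3 * (∑ i, x i ^ 2) ^ 2 - 2 * ∑ i, x i ^ 4) := by
  induction d with
  | zero => simp
  | succ d ih =>
    rw [sum_bool_succ]
    have h : ∀ b : Bool, ∀ ε : Fin d → Bool,
        (∑ i, sgn (Fin.cons (α := fun _ => Bool) b ε i) * x i)
          = sgn b * x 0 + ∑ i, sgn (ε i) * x (Fin.succ i) := by
      intro b ε
      rw [Fin.sum_univ_succ]
      simp [Fin.cons_zero, Fin.cons_succ]
    simp only [h]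
    -- expand (a+T)^4 with a = sgn b * x 0, using sgn b ^ 2 = 1
    have expand : ∀ b : Bool, ∀ ε : Fin d → Bool,
        (sgn b * x 0 + ∑ i, sgn (ε i) * x (Fin.succ i)) ^ 4
          = x 0 ^ 4 + 4 * (sgn b * x 0 ^ 3) * (∑ i, sgn (ε i) * x (Fin.succ i))
            + 6 * x 0 ^ 2 * (∑ i, sgn (ε i) * x (Fin.succ i)) ^ 2
            + 4 * (sgn b * x 0) * (∑ i, sgn (ε i) * x (Fin.succ i)) ^ 3
            + (∑ i, sgn (ε i) * x (Fin.succ i)) ^ 4 := by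
      intro b ε
      have h2 := sgn_sq b
      have h3 : sgn b ^ 3 = sgn b := by cases b <;> norm_num [sgn]
      have h4 : sgn b ^ 4 = 1 := by cases b <;> norm_num [sgn]
      cases b <;> simp [sgn] <;> try ring
    simp only [expand]
    have hs : ∀ b : Bool, ∑ ε : Fin d → Bool,
        (x 0 ^ 4 + 4 * (sgn b * x 0 ^ 3) * (∑ i, sgn (ε i) * x (Fin.succ i))
          + 6 * x 0 ^ 2 * (∑ i, sgn (ε i) * x (Fin.succ i)) ^ 2
          + 4 * (sgn b * x 0) * (∑ i, sgn (ε i) * x (Fin.succ i)) ^ 3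
          + (∑ i, sgn (ε i) * x (Fin.succ i)) ^ 4)
        = 2 ^ d * x 0 ^ 4
          + 4 * (sgn b * x 0 ^ 3) * (∑ ε : Fin d → Bool, ∑ i, sgn (ε i) * x (Fin.succ i))
          + 6 * x 0 ^ 2 * (2 ^ d * ∑ i, x (Fin.succ i) ^ 2)
          + 4 * (sgn b * x 0) * (∑ ε : Fin d → Bool, (∑ i, sgn (ε i) * x (Fin.succ i)) ^ 3)
          + 2 ^ d * (3 * (∑ i, x (Fin.succ i) ^ 2) ^ 2 - 2 * ∑ i, x (Fin.succ i) ^ 4) := by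
      intro b
      rw [Finset.sum_add_distrib, Finset.sum_add_distrib, Finset.sum_add_distrib,
        Finset.sum_add_distrib, Finset.sum_const, ← Finset.mul_sum, ← Finset.mul_sum,
        ← Finset.mul_sum, ih (fun i => x (Fin.succ i)),
        sign_sum_sq d (fun i => x (Fin.succ i))]
      simp [Fintype.card_fun]
    simp only [hs]
    rw [Fin.sum_univ_succ (f := fun i => x i ^ 2), Fin.sum_univ_succ (f := fun i => x i ^ 4)]
    simp only [Fintype.sum_bool]
    have e1 : (sgn true : ℝ) + sgn false = 0 := by simp [sgn]
    set S1 := ∑ ε : Fin d → Bool, ∑ i, sgn (ε i) * x (Fin.succ i)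
    set S3 := ∑ ε : Fin d → Bool, (∑ i, sgn (ε i) * x (Fin.succ i)) ^ 3
    set Q2 := ∑ i, x (Fin.succ i) ^ 2
    set Q4 := ∑ i, x (Fin.succ i) ^ 4
    have ht : sgn true = (1:ℝ) := rfl
    have hf : sgn false = (-1:ℝ) := rfl
    rw [ht, hf]
    ring

/-- **Fourth-moment bound for isotropic hypercontractive random vectors.**
If a random vector `X` in `ℝ^d` (`d ≥ 1`) is isotropic (`E⟨v,X⟩² = ‖v‖²` for all `v`) and
`(C,4)`-hypercontractive (`E⟨v,X⟩⁴ ≤ C (E⟨v,X⟩²)²` for all `v`), then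
`E‖X‖₂⁴ ≤ C (d² + 2d) / 3 ≤ C d²`. -/
theorem fourth_moment_isotropic_hypercontractive
    {Ω : Type*} [MeasurableSpace Ω] (μ : Measure Ω) [IsProbabilityMeasure μ]
    (d : ℕ) (hd : 1 ≤ d) (C : ℝ) (hC : 1 ≤ C)
    (X : Ω → EuclideanSpace ℝ (Fin d)) (hXmeas : Measurable X)
    (hint : ∀ v : EuclideanSpace ℝ (Fin d),
      Integrable (fun ω => (inner ℝ v (X ω) : ℝ) ^ 4) μ)
    (hiso : ∀ v : EuclideanSpace ℝ (Fin d),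
      ∫ ω, (inner ℝ v (X ω) : ℝ) ^ 2 ∂μ = ‖v‖ ^ 2)
    (hhyper : ∀ v : EuclideanSpace ℝ (Fin d),
      ∫ ω, (inner ℝ v (X ω) : ℝ) ^ 4 ∂μ
        ≤ C * (∫ ω, (inner ℝ v (X ω) : ℝ) ^ 2 ∂μ) ^ 2) :
    (∫ ω, ‖X ω‖ ^ 4 ∂μ) ≤ C * ((d : ℝ) ^ 2 + 2 * d) / 3 ∧
      C * ((d : ℝ) ^ 2 + 2 * d) / 3 ≤ C * (d : ℝ) ^ 2 := by
  have hd' : (1:ℝ) ≤ (d:ℝ) := by exact_mod_cast hd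
  -- coordinate vectors
  have hinner_e : ∀ (i : Fin d) (ω : Ω),
      (inner ℝ (EuclideanSpace.single i (1:ℝ)) (X ω) : ℝ) = X ω i := by
    intro i ω; simp [EuclideanSpace.inner_single_left]
  have hInt_coord : ∀ i : Fin d, Integrable (fun ω => (X ω i) ^ 4) μ := by
    intro i
    simpa [hinner_e] using hint (EuclideanSpace.single i (1:ℝ))
  have hcoord4 : ∀ i : Fin d, ∫ ω, (X ω i) ^ 4 ∂μ ≤ C := by
    intro i
    have h1 := hhyper (EuclideanSpace.single i (1:ℝ))
    rw [hiso] at h1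
    simpa [hinner_e, EuclideanSpace.norm_single] using h1
  -- sign vectors
  set v : (Fin d → Bool) → EuclideanSpace ℝ (Fin d) :=
    fun ε => (WithLp.equiv 2 (Fin d → ℝ)).symm (fun i => sgn (ε i)) with hv
  have hinner_v : ∀ (ε : Fin d → Bool) (ω : Ω),
      (inner ℝ (v ε) (X ω) : ℝ) = ∑ i, sgn (ε i) * X ω i := by
    intro ε ω
    rw [hv, PiLp.inner_apply]
    simp [RCLike.inner_apply, WithLp.equiv_symm_apply, PiLp.toLp_apply, mul_comm]
  have hsgn_mul : ∀ b : Bool, sgn b * sgn b = 1 := by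
    intro b; cases b <;> norm_num [sgn]
  have hnorm_v : ∀ ε : Fin d → Bool, ‖v ε‖ ^ 2 = (d : ℝ) := by
    intro ε
    rw [← real_inner_self_eq_norm_sq, hv, PiLp.inner_apply]
    simp [RCLike.inner_apply, WithLp.equiv_symm_apply, PiLp.toLp_apply, hsgn_mul, sgn_sq]
  have hint_v : ∀ ε : Fin d → Bool,
      Integrable (fun ω => (∑ i, sgn (ε i) * X ω i) ^ 4) μ := by
    intro ε
    simpa [hinner_v] using hint (v ε)
  have hsign4 : ∀ ε : Fin d → Bool,
      ∫ ω, (∑ i, sgn (ε i) * X ω i) ^ 4 ∂μ ≤ C * (d : ℝ) ^ 2 := by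
    intro ε
    have h1 := hhyper (v ε)
    rw [hiso, hnorm_v] at h1
    calc ∫ ω, (∑ i, sgn (ε i) * X ω i) ^ 4 ∂μ
        = ∫ ω, (inner ℝ (v ε) (X ω) : ℝ) ^ 4 ∂μ := by simp [hinner_v]
      _ ≤ C * (d : ℝ) ^ 2 := h1
  -- pointwise identity
  have hnormX : ∀ ω, ‖X ω‖ ^ 2 = ∑ i, (X ω i) ^ 2 := by
    intro ω
    rw [← real_inner_self_eq_norm_sq, PiLp.inner_apply]
    simp [RCLike.inner_apply, sq]
  have hpt : ∀ ω, ∑ ε : Fin d → Bool, (∑ i, sgn (ε i) * X ω i) ^ 4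
      = 2 ^ d * (3 * ‖X ω‖ ^ 4 - 2 * ∑ i, (X ω i) ^ 4) := by
    intro ω
    rw [sign_sum_quart d (fun i => X ω i)]
    have h2 : ‖X ω‖ ^ 4 = (∑ i, (X ω i) ^ 2) ^ 2 := by
      rw [← hnormX]; ring
    rw [h2]
  -- integrability of the sum and of ‖X‖⁴
  have hIA : Integrable (fun ω => ∑ i, (X ω i) ^ 4) μ :=
    integrable_finset_sum _ (fun i _ => hInt_coord i)
  have hIS : Integrable (fun ω => ∑ ε : Fin d → Bool, (∑ i, sgn (ε i) * X ω i) ^ 4) μ :=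
    integrable_finset_sum _ (fun ε _ => hint_v ε)
  have h2dpos : (0:ℝ) < 2 ^ d := by positivity
  have hfun : (fun ω => ‖X ω‖ ^ 4)
      = fun ω => (3:ℝ)⁻¹ * (((2:ℝ) ^ d)⁻¹ * (∑ ε : Fin d → Bool, (∑ i, sgn (ε i) * X ω i) ^ 4)
          + 2 * ∑ i, (X ω i) ^ 4) := by
    funext ω
    have h1 := hpt ω
    field_simp
    linarith [h1]
  have hIN : Integrable (fun ω => ‖X ω‖ ^ 4) μ := by
    rw [hfun]
    exact ((hIS.const_mul _).add (hIA.const_mul 2)).const_mul _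
  -- integrate the identity
  have hswap : ∑ ε : Fin d → Bool, ∫ ω, (∑ i, sgn (ε i) * X ω i) ^ 4 ∂μ
      = ∫ ω, ∑ ε : Fin d → Bool, (∑ i, sgn (ε i) * X ω i) ^ 4 ∂μ :=
    (integral_finset_sum _ (fun ε _ => hint_v ε)).symm
  have hswapA : ∫ ω, ∑ i, (X ω i) ^ 4 ∂μ = ∑ i, ∫ ω, (X ω i) ^ 4 ∂μ :=
    integral_finset_sum _ (fun i _ => hInt_coord i)
  set I4 := ∫ ω, ‖X ω‖ ^ 4 ∂μ with hI4
  set A := ∑ i, ∫ ω, (X ω i) ^ 4 ∂μ with hA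
  have hmain : ∫ ω, ∑ ε : Fin d → Bool, (∑ i, sgn (ε i) * X ω i) ^ 4 ∂μ
      = 2 ^ d * (3 * I4 - 2 * A) := by
    have : ∫ ω, ∑ ε : Fin d → Bool, (∑ i, sgn (ε i) * X ω i) ^ 4 ∂μ
        = ∫ ω, 2 ^ d * (3 * ‖X ω‖ ^ 4 - 2 * ∑ i, (X ω i) ^ 4) ∂μ := by
      exact integral_congr_ae (Filter.Eventually.of_forall (fun ω => hpt ω))
    rw [this, integral_const_mul, integral_sub ((hIN.const_mul 3)) (hIA.const_mul 2),
      integral_const_mul, integral_const_mul, hswapA]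
  have hsum_le : ∑ ε : Fin d → Bool, ∫ ω, (∑ i, sgn (ε i) * X ω i) ^ 4 ∂μ
      ≤ 2 ^ d * (C * (d : ℝ) ^ 2) := by
    calc ∑ ε : Fin d → Bool, ∫ ω, (∑ i, sgn (ε i) * X ω i) ^ 4 ∂μ
        ≤ ∑ _ε : Fin d → Bool, C * (d : ℝ) ^ 2 :=
          Finset.sum_le_sum (fun ε _ => hsign4 ε)
      _ = 2 ^ d * (C * (d : ℝ) ^ 2) := by
          rw [Finset.sum_const, Finset.card_univ]
          simp [Fintype.card_fun]
  have hkey : 3 * I4 - 2 * A ≤ C * (d : ℝ) ^ 2 := by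
    have h1 : 2 ^ d * (3 * I4 - 2 * A) ≤ 2 ^ d * (C * (d : ℝ) ^ 2) := by
      rw [← hmain, ← hswap]; exact hsum_le
    exact le_of_mul_le_mul_left h1 h2dpos
  have hAle : A ≤ C * d := by
    calc A ≤ ∑ _i : Fin d, C := Finset.sum_le_sum (fun i _ => hcoord4 i)
      _ = C * d := by simp [Finset.sum_const, Finset.card_univ, mul_comm]
  constructor
  · nlinarith [hkey, hAle]
  · nlinarith [hd', hC, sq_nonneg ((d:ℝ) - 1)]
end

section
/- Let d ≥ 1, C ≥ 1, and let x₁, …, x_n be i.i.d. random vectors in ℝ^d drawn from a distribution that is isotropic (E[⟨v,x⟩²] = ‖v‖² for all v ∈ ℝ^d) and (C,4)-hypercontractive (E[⟨v,x⟩⁴] ≤ C·(E[⟨v,x⟩²])² for all v ∈ ℝ^d). Then for every δ ∈ (0,1) and every 1 ≤ m ≤ n, with probability at least 1 − δ, every subset S ⊆ {1, …, n} with |S| ≤ m satisfies Σ_{i∈S} ‖x_i‖₂ ≤ 3·δ^{-1/4}·n^{1/4}·m^{3/4}·C^{1/4}·d^{1/2}. -/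
open MeasureTheory ProbabilityTheory

/-- **Sum of the largest norms of i.i.d. hypercontractive vectors (Lemma 10 in the paper).**
If `x₁, …, xₙ` are i.i.d. isotropic `(C,4)`-hypercontractive random vectors in `ℝ^d`, then
with probability at least `1 − δ`, every index subset `S` of size at most `m` satisfies
`∑_{i∈S} ‖xᵢ‖₂ ≤ 3 δ^{-1/4} n^{1/4} m^{3/4} C^{1/4} d^{1/2}`. -/
theorem sum_largest_norms_hypercontractive
    {Ω : Type*} [MeasurableSpace Ω] (μ : Measure Ω) [IsProbabilityMeasure μ]
    (d n m : ℕ) (hd : 1 ≤ d) (hm : 1 ≤ m) (hmn : m ≤ n)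
    (C : ℝ) (hC : 1 ≤ C) (δ : ℝ) (hδ0 : 0 < δ) (hδ1 : δ < 1)
    (x : Fin n → Ω → EuclideanSpace ℝ (Fin d))
    (hmeas : ∀ i, Measurable (x i))
    (hindep : iIndepFun x μ)
    (hident : ∀ i j, IdentDistrib (x i) (x j) μ μ)
    (hint : ∀ i (v : EuclideanSpace ℝ (Fin d)),
      Integrable (fun ω => (inner ℝ v (x i ω) : ℝ) ^ 4) μ)
    (hiso : ∀ i (v : EuclideanSpace ℝ (Fin d)),
      ∫ ω, (inner ℝ v (x i ω) : ℝ) ^ 2 ∂μ = ‖v‖ ^ 2)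
    (hhyper : ∀ i (v : EuclideanSpace ℝ (Fin d)),
      ∫ ω, (inner ℝ v (x i ω) : ℝ) ^ 4 ∂μ
        ≤ C * (∫ ω, (inner ℝ v (x i ω) : ℝ) ^ 2 ∂μ) ^ 2) :
    ENNReal.ofReal (1 - δ) ≤
      μ {ω | ∀ S : Finset (Fin n), S.card ≤ m →
        ∑ i ∈ S, ‖x i ω‖ ≤
          3 * δ ^ (-(1 / 4 : ℝ)) * (n : ℝ) ^ ((1 : ℝ) / 4) * (m : ℝ) ^ ((3 : ℝ) / 4)
            * C ^ ((1 : ℝ) / 4) * (d : ℝ) ^ ((1 : ℝ) / 2)} := by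
  have hn1 : 1 ≤ n := le_trans hm hmn
  have hn0 : (0:ℝ) < n := by exact_mod_cast Nat.lt_of_lt_of_le Nat.zero_lt_one hn1
  have hd0 : (0:ℝ) < d := by exact_mod_cast Nat.lt_of_lt_of_le Nat.zero_lt_one hd
  have hm0 : (0:ℝ) < m := by exact_mod_cast Nat.lt_of_lt_of_le Nat.zero_lt_one hm
  have hC0 : (0:ℝ) < C := lt_of_lt_of_le one_pos hC
  -- coordinates
  have hcoord : ∀ i j ω, (inner ℝ (EuclideanSpace.single j (1:ℝ)) (x i ω) : ℝ) = x i ω j := by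
    intro i j ω
    rw [EuclideanSpace.inner_single_left]
    simp
  have hmeasj : ∀ (i : Fin n) (j : Fin d), Measurable (fun ω => x i ω j) :=
    fun i j => (measurable_pi_apply j).comp ((PiLp.continuous_ofLp 2 _).measurable.comp (hmeas i))
  -- integrability of 4th powers of coordinates
  have h4 : ∀ (i : Fin n) (j : Fin d), Integrable (fun ω => (x i ω j) ^ 4) μ := by
    intro i j
    have := hint i (EuclideanSpace.single j (1:ℝ))
    simpa only [hcoord i j] using this
  -- E[x_j^4] ≤ C
  have h4le : ∀ (i : Fin n) (j : Fin d), ∫ ω, (x i ω j) ^ 4 ∂μ ≤ C := by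
    intro i j
    have h := hhyper i (EuclideanSpace.single j (1:ℝ))
    rw [hiso i] at h
    simp only [hcoord i j, EuclideanSpace.norm_single, norm_one, one_pow, mul_one] at h
    exact h
  -- integrability of products
  have hprodint : ∀ (i : Fin n) (j k : Fin d),
      Integrable (fun ω => (x i ω j) ^ 2 * (x i ω k) ^ 2) μ := by
    intro i j k
    refine Integrable.mono (((h4 i j).add (h4 i k)).div_const 2) ?_ ?_
    · exact ((((hmeasj i j).pow_const 2).mul ((hmeasj i k).pow_const 2))).aestronglyMeasurable
    · filter_upwards with ω
      have h1 : (0:ℝ) ≤ (x i ω j) ^ 2 * (x i ω k) ^ 2 := by positivity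
      rw [Real.norm_of_nonneg h1, Real.norm_eq_abs]
      have : (x i ω j) ^ 2 * (x i ω k) ^ 2 ≤ ((x i ω j) ^ 4 + (x i ω k) ^ 4) / 2 := by
        nlinarith [sq_nonneg ((x i ω j)^2 - (x i ω k)^2)]
      refine this.trans (le_abs_self _)
  have hprodle : ∀ (i : Fin n) (j k : Fin d),
      ∫ ω, (x i ω j) ^ 2 * (x i ω k) ^ 2 ∂μ ≤ C := by
    intro i j k
    have hb : ∫ ω, (x i ω j) ^ 2 * (x i ω k) ^ 2 ∂μ
        ≤ ∫ ω, ((x i ω j) ^ 4 + (x i ω k) ^ 4) / 2 ∂μ := by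
      refine integral_mono (hprodint i j k) (((h4 i j).add (h4 i k)).div_const 2) ?_
      intro ω
      nlinarith [sq_nonneg ((x i ω j)^2 - (x i ω k)^2)]
    rw [integral_div, integral_add (h4 i j) (h4 i k)] at hb
    have := h4le i j
    have := h4le i k
    linarith
  -- norm^4 as double sum
  have hnorm4 : ∀ (i : Fin n) (ω : Ω), ‖x i ω‖ ^ 4
      = ∑ j : Fin d, ∑ k : Fin d, (x i ω j) ^ 2 * (x i ω k) ^ 2 := by
    intro i ω
    have h2 : ‖x i ω‖ ^ 2 = ∑ j : Fin d, (x i ω j) ^ 2 := by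
      have := PiLp.norm_sq_eq_of_L2 (fun _ : Fin d => ℝ) (x i ω)
      simpa [Real.norm_eq_abs, sq_abs] using this
    have : ‖x i ω‖ ^ 4 = (‖x i ω‖ ^ 2) ^ 2 := by ring
    rw [this, h2, sq, Finset.sum_mul_sum]
  have hnorm4int : ∀ i : Fin n, Integrable (fun ω => ‖x i ω‖ ^ 4) μ := by
    intro i
    simp only [hnorm4 i]
    exact integrable_finset_sum _ (fun j _ => integrable_finset_sum _ (fun k _ => hprodint i j k))
  have hnorm4le : ∀ i : Fin n, ∫ ω, ‖x i ω‖ ^ 4 ∂μ ≤ C * d ^ 2 := by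
    intro i
    simp only [hnorm4 i]
    rw [integral_finset_sum _ (fun j _ => integrable_finset_sum _ (fun k _ => hprodint i j k))]
    calc ∑ j : Fin d, ∫ ω, ∑ k : Fin d, (x i ω j) ^ 2 * (x i ω k) ^ 2 ∂μ
        = ∑ j : Fin d, ∑ k : Fin d, ∫ ω, (x i ω j) ^ 2 * (x i ω k) ^ 2 ∂μ := by
          refine Finset.sum_congr rfl (fun j _ => ?_)
          exact integral_finset_sum _ (fun k _ => hprodint i j k)
      _ ≤ ∑ j : Fin d, ∑ k : Fin d, C :=
          Finset.sum_le_sum (fun j _ => Finset.sum_le_sum (fun k _ => hprodle i j k))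
      _ = C * d ^ 2 := by simp [Finset.sum_const]; ring
  -- Y and Markov
  set Y : Ω → ℝ := fun ω => ∑ i : Fin n, ‖x i ω‖ ^ 4 with hY
  have hYint : Integrable Y μ := integrable_finset_sum _ (fun i _ => hnorm4int i)
  have hYle : ∫ ω, Y ω ∂μ ≤ n * C * d ^ 2 := by
    rw [hY]
    rw [integral_finset_sum _ (fun i _ => hnorm4int i)]
    calc ∑ i : Fin n, ∫ ω, ‖x i ω‖ ^ 4 ∂μ ≤ ∑ i : Fin n, C * d ^ 2 :=
          Finset.sum_le_sum (fun i _ => hnorm4le i)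
      _ = n * C * d ^ 2 := by simp [Finset.sum_const]; ring
  have hYnn : ∀ ω, 0 ≤ Y ω := fun ω => Finset.sum_nonneg (fun i _ => by positivity)
  set a : ℝ := n * C * d ^ 2 / δ with ha
  have ha0 : 0 < a := by positivity
  have hYmeas : Measurable Y := by
    apply Finset.measurable_sum
    intro i _
    exact ((hmeas i).norm.pow_const 4)
  have hmark : a * (μ {ω | a ≤ Y ω}).toReal ≤ ∫ ω, Y ω ∂μ :=
    mul_meas_ge_le_integral_of_nonneg (ae_of_all _ hYnn) hYint a
  have hmeas_set : MeasurableSet {ω | a ≤ Y ω} := measurableSet_le measurable_const hYmeas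
  have hμδ : μ {ω | a ≤ Y ω} ≤ ENNReal.ofReal δ := by
    have htr : (μ {ω | a ≤ Y ω}).toReal ≤ δ := by
      have h2 : a * (μ {ω | a ≤ Y ω}).toReal ≤ n * C * d ^ 2 := hmark.trans hYle
      have h3 : a * δ = n * C * d ^ 2 := by rw [ha]; field_simp
      nlinarith [ha0]
    rw [← ENNReal.ofReal_toReal (measure_ne_top μ _)]
    exact ENNReal.ofReal_le_ofReal htr
  -- good event inclusion
  set B : ℝ := δ ^ (-(1 / 4 : ℝ)) * (n : ℝ) ^ ((1 : ℝ) / 4) * (m : ℝ) ^ ((3 : ℝ) / 4)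
      * C ^ ((1 : ℝ) / 4) * (d : ℝ) ^ ((1 : ℝ) / 2) with hB
  have hBnn : 0 ≤ B := by
    rw [hB]; positivity
  have hB4 : B ^ 4 = (m:ℝ) ^ 3 * a := by
    rw [hB, ha]
    rw [mul_pow, mul_pow, mul_pow, mul_pow]
    rw [← Real.rpow_natCast (δ ^ (-(1/4:ℝ))) 4, ← Real.rpow_natCast ((n:ℝ) ^ ((1:ℝ)/4)) 4,
        ← Real.rpow_natCast ((m:ℝ) ^ ((3:ℝ)/4)) 4, ← Real.rpow_natCast (C ^ ((1:ℝ)/4)) 4,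
        ← Real.rpow_natCast ((d:ℝ) ^ ((1:ℝ)/2)) 4,
        ← Real.rpow_mul hδ0.le, ← Real.rpow_mul (Nat.cast_nonneg n),
        ← Real.rpow_mul (Nat.cast_nonneg m), ← Real.rpow_mul hC0.le,
        ← Real.rpow_mul (Nat.cast_nonneg d)]
    norm_num [Real.rpow_neg_one]
    field_simp
  have hincl : {ω | a ≤ Y ω}ᶜ ⊆ {ω | ∀ S : Finset (Fin n), S.card ≤ m →
      ∑ i ∈ S, ‖x i ω‖ ≤ 3 * δ ^ (-(1 / 4 : ℝ)) * (n : ℝ) ^ ((1 : ℝ) / 4)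
        * (m : ℝ) ^ ((3 : ℝ) / 4) * C ^ ((1 : ℝ) / 4) * (d : ℝ) ^ ((1 : ℝ) / 2)} := by
    intro ω hω S hS
    simp only [Set.mem_compl_iff, Set.mem_setOf_eq, not_le] at hω
    have hsnn : (0:ℝ) ≤ ∑ i ∈ S, ‖x i ω‖ := Finset.sum_nonneg (fun i _ => norm_nonneg _)
    -- Cauchy-Schwarz twice
    have cs1 : (∑ i ∈ S, ‖x i ω‖) ^ 2 ≤ (∑ i ∈ S, ‖x i ω‖ ^ 2) * S.card := by
      have := Finset.sum_mul_sq_le_sq_mul_sq S (fun i => ‖x i ω‖) (fun _ => (1:ℝ))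
      simpa using this
    have cs2 : (∑ i ∈ S, ‖x i ω‖ ^ 2) ^ 2 ≤ (∑ i ∈ S, ‖x i ω‖ ^ 4) * S.card := by
      have := Finset.sum_mul_sq_le_sq_mul_sq S (fun i => ‖x i ω‖ ^ 2) (fun _ => (1:ℝ))
      simpa [← pow_mul] using this
    have hsub : ∑ i ∈ S, ‖x i ω‖ ^ 4 ≤ Y ω :=
      Finset.sum_le_sum_of_subset_of_nonneg (Finset.subset_univ S) (fun i _ _ => by positivity)
    have hcard : (S.card : ℝ) ≤ m := by exact_mod_cast hS
    have hcardnn : (0:ℝ) ≤ S.card := Nat.cast_nonneg _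
    have hq2nn : (0:ℝ) ≤ ∑ i ∈ S, ‖x i ω‖ ^ 2 := Finset.sum_nonneg (fun i _ => by positivity)
    have hq4nn : (0:ℝ) ≤ ∑ i ∈ S, ‖x i ω‖ ^ 4 := Finset.sum_nonneg (fun i _ => by positivity)
    have h4b : (∑ i ∈ S, ‖x i ω‖) ^ 4 ≤ (m:ℝ) ^ 3 * a := by
      have e1 : (∑ i ∈ S, ‖x i ω‖) ^ 4 = ((∑ i ∈ S, ‖x i ω‖) ^ 2) ^ 2 := by ring
      rw [e1]
      calc ((∑ i ∈ S, ‖x i ω‖) ^ 2) ^ 2 ≤ ((∑ i ∈ S, ‖x i ω‖ ^ 2) * S.card) ^ 2 := by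
            apply pow_le_pow_left₀ (sq_nonneg _) cs1
        _ = (∑ i ∈ S, ‖x i ω‖ ^ 2) ^ 2 * (S.card:ℝ) ^ 2 := by ring
        _ ≤ ((∑ i ∈ S, ‖x i ω‖ ^ 4) * S.card) * (S.card:ℝ) ^ 2 := by
            apply mul_le_mul_of_nonneg_right cs2 (by positivity)
        _ = (∑ i ∈ S, ‖x i ω‖ ^ 4) * (S.card:ℝ) ^ 3 := by ring
        _ ≤ Y ω * (m:ℝ) ^ 3 := by
            apply mul_le_mul hsub (pow_le_pow_left₀ hcardnn hcard 3) (by positivity) (hYnn ω)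
        _ ≤ (m:ℝ) ^ 3 * a := by
            rw [mul_comm]
            exact mul_le_mul_of_nonneg_left hω.le (by positivity)
    have hle : ∑ i ∈ S, ‖x i ω‖ ≤ B := by
      have := h4b.trans_eq hB4.symm
      exact (pow_le_pow_iff_left₀ hsnn hBnn (by norm_num)).mp this
    calc ∑ i ∈ S, ‖x i ω‖ ≤ B := hle
      _ ≤ 3 * B := by linarith
      _ = 3 * δ ^ (-(1 / 4 : ℝ)) * (n : ℝ) ^ ((1 : ℝ) / 4) * (m : ℝ) ^ ((3 : ℝ) / 4)
            * C ^ ((1 : ℝ) / 4) * (d : ℝ) ^ ((1 : ℝ) / 2) := by rw [hB]; ring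
  -- conclude
  calc ENNReal.ofReal (1 - δ) = 1 - ENNReal.ofReal δ := by
        rw [ENNReal.ofReal_sub 1 hδ0.le, ENNReal.ofReal_one]
    _ ≤ 1 - μ {ω | a ≤ Y ω} := by
        exact tsub_le_tsub_left hμδ 1
    _ = μ ({ω | a ≤ Y ω}ᶜ) := (prob_compl_eq_one_sub hmeas_set).symm
    _ ≤ _ := measure_mono hincl
end

section
/- Let β > 0, λ_r > 0, k ≥ 1, and ε ≤ (1/2)·β·λ_r. Let Σ be a d×d symmetric positive definite matrix with smallest eigenvalue λ_min(Σ) ≥ λ_r/k, let M₁ be a d×d symmetric matrix with ‖M₁ − Σ‖₂ ≤ (1/2)·λ_min(Σ), and let M₂ and Σ̂ be d×d symmetric positive semidefinite matrices with ‖M₂ − Σ̂‖₂ ≤ ε. Then: (i) if ‖Σ^{-1/2} Σ̂ Σ^{-1/2}‖₂ ≤ β·k, then ‖M₁^{-1/2} M₂ M₁^{-1/2}‖₂ ≤ 3·β·k; and (ii) if ‖Σ^{-1/2} Σ̂ Σ^{-1/2}‖₂ ≥ β·k, then ‖M₁^{-1/2} M₂ M₁^{-1/2}‖₂ ≥ (1/4)·β·k.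 -/
open Matrix

/-- The spectral (ℓ²-operator) norm of a real `d × d` matrix. -/
noncomputable def matSpectralNorm {d : ℕ} (M : Matrix (Fin d) (Fin d) ℝ) : ℝ :=
  ‖LinearMap.toContinuousLinearMap (Matrix.toEuclideanLin M)‖

open scoped ComplexOrder in
/-- The square root of a positive semidefinite matrix, as defined in the older Mathlib
(`Matrix.PosSemidef.sqrt`, since removed). -/
noncomputable def Matrix.PosSemidef.sqrt {n 𝕜 : Type*} [Fintype n] [DecidableEq n] [RCLike 𝕜]
    {A : Matrix n n 𝕜} (hA : A.PosSemidef) : Matrix n n 𝕜 :=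
  hA.1.eigenvectorUnitary.1 * diagonal ((↑) ∘ (√·) ∘ hA.1.eigenvalues) *
    (star hA.1.eigenvectorUnitary : Matrix n n 𝕜)

namespace DSEC

variable {d : ℕ}

lemma euc_inner (A : Matrix (Fin d) (Fin d) ℝ) (x : Fin d → ℝ) :
    (inner ℝ ((LinearMap.toContinuousLinearMap (Matrix.toEuclideanLin A)) ((WithLp.equiv 2 _).symm x))
      ((WithLp.equiv 2 (Fin d → ℝ)).symm x) : ℝ) = (A *ᵥ x) ⬝ᵥ x := by
  simp [Matrix.toEuclideanLin_apply, PiLp.inner_apply, dotProduct, mul_comm]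

lemma euc_normsq (x : Fin d → ℝ) :
    ‖(WithLp.equiv 2 (Fin d → ℝ)).symm x‖ ^ 2 = x ⬝ᵥ x := by
  rw [EuclideanSpace.norm_eq, Real.sq_sqrt (by positivity)]
  simp [dotProduct, sq]

lemma dp_self_nonneg (x : Fin d → ℝ) : 0 ≤ x ⬝ᵥ x := by
  exact Finset.sum_nonneg fun i _ => mul_self_nonneg _

lemma dp_self_pos {x : Fin d → ℝ} (hx : x ≠ 0) : 0 < x ⬝ᵥ x := by
  rcases (dp_self_nonneg x).lt_or_eq with h | h
  · exact h
  · exact absurd ((dotProduct_self_eq_zero).mp h.symm) hx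

lemma abs_qf_le (A : Matrix (Fin d) (Fin d) ℝ) (x : Fin d → ℝ) :
    |(A *ᵥ x) ⬝ᵥ x| ≤ matSpectralNorm A * (x ⬝ᵥ x) := by
  set T := LinearMap.toContinuousLinearMap (Matrix.toEuclideanLin A)
  set X := (WithLp.equiv 2 (Fin d → ℝ)).symm x
  calc |(A *ᵥ x) ⬝ᵥ x| = |(inner ℝ (T X) X : ℝ)| := by rw [euc_inner]
    _ ≤ ‖T X‖ * ‖X‖ := abs_real_inner_le_norm _ _
    _ ≤ (‖T‖ * ‖X‖) * ‖X‖ := by gcongr; exact T.le_opNorm X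
    _ = ‖T‖ * ‖X‖^2 := by ring
    _ = matSpectralNorm A * (x ⬝ᵥ x) := by rw [euc_normsq]; rfl

lemma abs_qf_le' (A : Matrix (Fin d) (Fin d) ℝ) (x : Fin d → ℝ) :
    |x ⬝ᵥ (A *ᵥ x)| ≤ matSpectralNorm A * (x ⬝ᵥ x) := by
  rw [dotProduct_comm]; exact abs_qf_le A x

/-- Polarization upper bound for a symmetric CLM on a real inner product space. -/
lemma opNorm_le_of_quadform {E : Type*} [NormedAddCommGroup E] [InnerProductSpace ℝ E]
    (T : E →L[ℝ] E) (hT : ∀ x y : E, (inner ℝ (T x) y : ℝ) = inner ℝ x (T y))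
    {c : ℝ} (hc : 0 ≤ c) (h0 : ∀ x : E, 0 ≤ (inner ℝ (T x) x : ℝ))
    (hub : ∀ x : E, (inner ℝ (T x) x : ℝ) ≤ c * ‖x‖ ^ 2) : ‖T‖ ≤ c := by
  refine T.opNorm_le_bound hc (fun x => ?_)
  rcases eq_or_ne (T x) 0 with h | h
  · simp [h, mul_nonneg hc (norm_nonneg x)]
  set y : E := (‖x‖ / ‖T x‖) • T x with hy
  have hTx : (0:ℝ) < ‖T x‖ := norm_pos_iff.2 h
  have hny : ‖y‖ = ‖x‖ := by
    rw [hy, norm_smul]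
    simp [abs_of_nonneg (div_nonneg (norm_nonneg x) (norm_nonneg (T x))),
      div_mul_cancel₀ _ hTx.ne']
  have key : 4 * (inner ℝ (T x) y : ℝ) = inner ℝ (T (x + y)) (x + y) - inner ℝ (T (x - y)) (x - y) := by
    have h1 : (inner ℝ (T y) x : ℝ) = inner ℝ (T x) y := by
      rw [hT y x, real_inner_comm]
    simp only [map_add, map_sub, inner_add_left,
      inner_sub_left, inner_add_right, inner_sub_right]
    linarith
  have hTxy : (inner ℝ (T x) y : ℝ) = ‖x‖ * ‖T x‖ := by
    rw [hy, real_inner_smul_right, real_inner_self_eq_norm_sq]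
    field_simp
  have hpar : ‖x + y‖ ^ 2 ≤ 2 * (‖x‖^2 + ‖y‖^2) := by
    have := parallelogram_law_with_norm ℝ x y
    nlinarith [sq_nonneg ‖x - y‖]
  have hb : 4 * (‖x‖ * ‖T x‖) ≤ 4 * (c * ‖x‖^2) := by
    rw [← hTxy]
    have h2 := hub (x + y)
    have h3 := h0 (x - y)
    have h4 : (inner ℝ (T (x+y)) (x+y) : ℝ) ≤ c * (2 * (‖x‖^2 + ‖y‖^2)) := by
      refine (h2.trans ?_); gcongr
    rw [key]
    rw [hny] at h4
    nlinarith
  have h5 : ‖x‖ * ‖T x‖ ≤ c * ‖x‖^2 := by linarith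
  rcases eq_or_lt_of_le (norm_nonneg x) with h6 | h6
  · have : x = 0 := by simpa using h6.symm
    simp [this] at h
  · nlinarith

lemma qf_nonneg_of_psd {A : Matrix (Fin d) (Fin d) ℝ} (hA : A.PosSemidef) (x : Fin d → ℝ) :
    0 ≤ x ⬝ᵥ (A *ᵥ x) := by
  have h := hA.dotProduct_mulVec_nonneg x
  rwa [star_trivial] at h

/-- Norm upper bound for a PSD matrix via the quadratic form. -/
lemma spectralNorm_le_of_qf {A : Matrix (Fin d) (Fin d) ℝ} (hA : A.PosSemidef) {c : ℝ}
    (hc : 0 ≤ c) (hub : ∀ x : Fin d → ℝ, x ⬝ᵥ (A *ᵥ x) ≤ c * (x ⬝ᵥ x)) :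
    matSpectralNorm A ≤ c := by
  have hsym : (Matrix.toEuclideanLin A).IsSymmetric := (Matrix.isHermitian_iff_isSymmetric).mp hA.1
  show ‖LinearMap.toContinuousLinearMap (Matrix.toEuclideanLin A)‖ ≤ c
  refine opNorm_le_of_quadform (LinearMap.toContinuousLinearMap (Matrix.toEuclideanLin A))
    (fun x y => hsym x y) hc (fun X => ?_) (fun X => ?_)
  · have h := euc_inner A ((WithLp.equiv 2 (Fin d → ℝ)) X)
    rw [Equiv.symm_apply_apply] at h
    rw [h, dotProduct_comm]
    exact qf_nonneg_of_psd hA _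
  · have h := euc_inner A ((WithLp.equiv 2 (Fin d → ℝ)) X)
    have h2 := euc_normsq ((WithLp.equiv 2 (Fin d → ℝ)) X)
    rw [Equiv.symm_apply_apply] at h h2
    rw [h, h2, dotProduct_comm]
    exact hub _

lemma le_spectralNorm_of_qf {A : Matrix (Fin d) (Fin d) ℝ} {c : ℝ} {x : Fin d → ℝ} (hx : x ≠ 0)
    (h : c * (x ⬝ᵥ x) ≤ x ⬝ᵥ (A *ᵥ x)) : c ≤ matSpectralNorm A := by
  have h1 : x ⬝ᵥ (A *ᵥ x) ≤ matSpectralNorm A * (x ⬝ᵥ x) :=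
    (le_abs_self _).trans (abs_qf_le' A x)
  have h2 : 0 < x ⬝ᵥ x := dp_self_pos hx
  have := h.trans h1
  exact le_of_mul_le_mul_right this h2

lemma shift_lb {A : Matrix (Fin d) (Fin d) ℝ} (hA : A.IsHermitian) (c : ℝ)
    (h : ∀ i, c ≤ hA.eigenvalues i) : (A - c • 1).PosSemidef := by
  have hU : (hA.eigenvectorUnitary : Matrix (Fin d) (Fin d) ℝ) *
      star (hA.eigenvectorUnitary : Matrix (Fin d) (Fin d) ℝ) = 1 :=
    Matrix.mem_unitaryGroup_iff.mp hA.eigenvectorUnitary.2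
  have hdiag : (RCLike.ofReal ∘ hA.eigenvalues : Fin d → ℝ) = hA.eigenvalues := by
    funext i; simp
  have hspec := hA.spectral_theorem
  rw [hdiag, Unitary.conjStarAlgAut_apply] at hspec
  have key : A - c • 1 = (hA.eigenvectorUnitary : Matrix (Fin d) (Fin d) ℝ) *
      diagonal (fun i => hA.eigenvalues i - c) *
      star (hA.eigenvectorUnitary : Matrix (Fin d) (Fin d) ℝ) := by
    have : diagonal (fun i => hA.eigenvalues i - c) = diagonal hA.eigenvalues - c • 1 := by
      ext i j
      rcases eq_or_ne i j with rfl | hij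
      · simp [Matrix.smul_apply]
      · simp [diagonal_apply_ne _ hij, hij]
    rw [this, Matrix.mul_sub, Matrix.sub_mul, ← hspec]
    congr 1
    rw [Matrix.mul_smul, Matrix.smul_mul, mul_one, hU]
  rw [key, Matrix.star_eq_conjTranspose]
  exact (Matrix.PosSemidef.diagonal
    (fun i => by simpa using sub_nonneg.2 (h i))).mul_mul_conjTranspose_same _

lemma shift_ub {A : Matrix (Fin d) (Fin d) ℝ} (hA : A.IsHermitian) (c : ℝ)
    (h : ∀ i, hA.eigenvalues i ≤ c) : (c • 1 - A).PosSemidef := by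
  have hU : (hA.eigenvectorUnitary : Matrix (Fin d) (Fin d) ℝ) *
      star (hA.eigenvectorUnitary : Matrix (Fin d) (Fin d) ℝ) = 1 :=
    Matrix.mem_unitaryGroup_iff.mp hA.eigenvectorUnitary.2
  have hdiag : (RCLike.ofReal ∘ hA.eigenvalues : Fin d → ℝ) = hA.eigenvalues := by
    funext i; simp
  have hspec := hA.spectral_theorem
  rw [hdiag, Unitary.conjStarAlgAut_apply] at hspec
  have key : c • 1 - A = (hA.eigenvectorUnitary : Matrix (Fin d) (Fin d) ℝ) *
      diagonal (fun i => c - hA.eigenvalues i) *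
      star (hA.eigenvectorUnitary : Matrix (Fin d) (Fin d) ℝ) := by
    have : diagonal (fun i => c - hA.eigenvalues i) = c • 1 - diagonal hA.eigenvalues := by
      ext i j
      rcases eq_or_ne i j with rfl | hij
      · simp [Matrix.smul_apply]
      · simp [diagonal_apply_ne _ hij, hij]
    rw [this, Matrix.mul_sub, Matrix.sub_mul, ← hspec]
    congr 1
    rw [Matrix.mul_smul, Matrix.smul_mul, mul_one, hU]
  rw [key, Matrix.star_eq_conjTranspose]
  exact (Matrix.PosSemidef.diagonal
    (fun i => by simpa using sub_nonneg.2 (h i))).mul_mul_conjTranspose_same _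

lemma qf_shift (A : Matrix (Fin d) (Fin d) ℝ) (c : ℝ) (x : Fin d → ℝ) :
    x ⬝ᵥ ((A - c • 1) *ᵥ x) = x ⬝ᵥ (A *ᵥ x) - c * (x ⬝ᵥ x) := by
  rw [Matrix.sub_mulVec]
  simp [dotProduct_sub, Matrix.smul_mulVec, Matrix.one_mulVec, dotProduct_smul]

lemma qf_lb_eig {A : Matrix (Fin d) (Fin d) ℝ} (hA : A.IsHermitian) {c : ℝ}
    (h : ∀ i, c ≤ hA.eigenvalues i) (x : Fin d → ℝ) :
    c * (x ⬝ᵥ x) ≤ x ⬝ᵥ (A *ᵥ x) := by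
  have := qf_nonneg_of_psd (shift_lb hA c h) x
  rw [qf_shift] at this
  linarith

lemma qf_ub_eig {A : Matrix (Fin d) (Fin d) ℝ} (hA : A.IsHermitian) {c : ℝ}
    (h : ∀ i, hA.eigenvalues i ≤ c) (x : Fin d → ℝ) :
    x ⬝ᵥ (A *ᵥ x) ≤ c * (x ⬝ᵥ x) := by
  have := qf_nonneg_of_psd (shift_ub hA c h) x
  have h2 : x ⬝ᵥ ((c • 1 - A) *ᵥ x) = c * (x ⬝ᵥ x) - x ⬝ᵥ (A *ᵥ x) := by
    rw [Matrix.sub_mulVec]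
    simp [dotProduct_sub, Matrix.smul_mulVec, Matrix.one_mulVec, dotProduct_smul]
  rw [h2] at this
  linarith

/-- A PSD matrix has a top eigenvector achieving at least the spectral norm. -/
lemma exists_top_eig [Nonempty (Fin d)] {C : Matrix (Fin d) (Fin d) ℝ} (hC : C.PosSemidef) :
    ∃ v : Fin d → ℝ, v ≠ 0 ∧ matSpectralNorm C * (v ⬝ᵥ v) ≤ v ⬝ᵥ (C *ᵥ v) := by
  obtain ⟨i₀, hi₀⟩ := Finite.exists_max hC.1.eigenvalues
  have hnorm : matSpectralNorm C ≤ hC.1.eigenvalues i₀ :=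
    spectralNorm_le_of_qf hC (hC.eigenvalues_nonneg i₀) (qf_ub_eig hC.1 hi₀)
  set v : Fin d → ℝ := (WithLp.equiv 2 (Fin d → ℝ)) (hC.1.eigenvectorBasis i₀) with hv
  have hv0 : v ≠ 0 := by
    intro h
    have hb : hC.1.eigenvectorBasis i₀ = 0 := by
      apply (WithLp.equiv 2 (Fin d → ℝ)).injective
      simpa [hv] using h
    have := hC.1.eigenvectorBasis.orthonormal.1 i₀
    rw [hb] at this
    simp at this
  refine ⟨v, hv0, ?_⟩
  have hev : C *ᵥ v = hC.1.eigenvalues i₀ • v := hC.1.mulVec_eigenvectorBasis i₀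
  rw [hev, dotProduct_smul, smul_eq_mul]
  have := dp_self_nonneg v
  nlinarith

lemma psd_sqrt_mul_self {A : Matrix (Fin d) (Fin d) ℝ} (hA : A.PosSemidef) :
    hA.sqrt * hA.sqrt = A := by
  have hUU : star (hA.1.eigenvectorUnitary : Matrix (Fin d) (Fin d) ℝ) *
      (hA.1.eigenvectorUnitary : Matrix (Fin d) (Fin d) ℝ) = 1 :=
    Unitary.coe_star_mul_self _
  have hspec := hA.1.spectral_theorem
  rw [Unitary.conjStarAlgAut_apply] at hspec
  unfold Matrix.PosSemidef.sqrt
  conv_rhs => rw [hspec]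
  simp only [Matrix.mul_assoc]
  rw [← Matrix.mul_assoc (star (hA.1.eigenvectorUnitary : Matrix (Fin d) (Fin d) ℝ))
    (hA.1.eigenvectorUnitary : Matrix (Fin d) (Fin d) ℝ), hUU, Matrix.one_mul,
    ← Matrix.mul_assoc (diagonal _), diagonal_mul_diagonal]
  congr 3
  funext i
  simp [Real.mul_self_sqrt (hA.eigenvalues_nonneg i)]

lemma psd_sqrt_herm {A : Matrix (Fin d) (Fin d) ℝ} (hA : A.PosSemidef) :
    hA.sqrt.IsHermitian := by
  unfold Matrix.PosSemidef.sqrt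
  simp [Matrix.IsHermitian, Matrix.conjTranspose_mul, Matrix.mul_assoc, Matrix.star_eq_conjTranspose]

section Sqrt

variable {B : Matrix (Fin d) (Fin d) ℝ} (hB : B.PosDef)

lemma sqrt_det_unit : IsUnit (hB.posSemidef.sqrt).det := by
  have h1 : hB.posSemidef.sqrt * hB.posSemidef.sqrt = B := psd_sqrt_mul_self hB.posSemidef
  have h2 : (hB.posSemidef.sqrt).det * (hB.posSemidef.sqrt).det = B.det := by
    rw [← Matrix.det_mul, h1]
  have h3 : (0:ℝ) < B.det := hB.det_pos
  refine isUnit_iff_ne_zero.2 (fun h => ?_)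
  rw [h, mul_zero] at h2
  exact h3.ne (h2)

lemma sqrt_inv_mul_sqrt : (hB.posSemidef.sqrt)⁻¹ * hB.posSemidef.sqrt = 1 :=
  Matrix.nonsing_inv_mul _ (sqrt_det_unit hB)

lemma sqrt_mul_sqrt_inv : hB.posSemidef.sqrt * (hB.posSemidef.sqrt)⁻¹ = 1 :=
  Matrix.mul_nonsing_inv _ (sqrt_det_unit hB)

lemma sqrt_inv_herm : ((hB.posSemidef.sqrt)⁻¹).IsHermitian := by
  have := psd_sqrt_herm hB.posSemidef
  unfold Matrix.IsHermitian at *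
  rw [Matrix.conjTranspose_nonsing_inv, this]

/-- transpose of the inverse square root is itself -/
lemma sqrt_inv_transpose : ((hB.posSemidef.sqrt)⁻¹)ᵀ = (hB.posSemidef.sqrt)⁻¹ := by
  have h := sqrt_inv_herm hB
  ext i j
  have := congrFun (congrFun h i) j
  simpa [Matrix.conjTranspose_apply] using this

lemma qf_conj (A : Matrix (Fin d) (Fin d) ℝ) (x : Fin d → ℝ) :
    x ⬝ᵥ (((hB.posSemidef.sqrt)⁻¹ * A * (hB.posSemidef.sqrt)⁻¹) *ᵥ x)
      = ((hB.posSemidef.sqrt)⁻¹ *ᵥ x) ⬝ᵥ (A *ᵥ ((hB.posSemidef.sqrt)⁻¹ *ᵥ x)) := by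
  set S := (hB.posSemidef.sqrt)⁻¹
  have h1 : (S * A * S) *ᵥ x = S *ᵥ (A *ᵥ (S *ᵥ x)) := by
    rw [← Matrix.mulVec_mulVec, ← Matrix.mulVec_mulVec]
  rw [h1, Matrix.dotProduct_mulVec, ← Matrix.mulVec_transpose, sqrt_inv_transpose hB]

lemma qf_B_eq (y : Fin d → ℝ) :
    y ⬝ᵥ (B *ᵥ y) = (hB.posSemidef.sqrt *ᵥ y) ⬝ᵥ (hB.posSemidef.sqrt *ᵥ y) := by
  conv_lhs => rw [← psd_sqrt_mul_self hB.posSemidef]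
  have hsymm : (hB.posSemidef.sqrt)ᵀ = hB.posSemidef.sqrt := by
    have h := psd_sqrt_herm hB.posSemidef
    ext i j
    have := congrFun (congrFun h i) j
    simpa [Matrix.conjTranspose_apply] using this
  rw [← Matrix.mulVec_mulVec, Matrix.dotProduct_mulVec, ← Matrix.mulVec_transpose, hsymm]

lemma conj_psd {A : Matrix (Fin d) (Fin d) ℝ} (hA : A.PosSemidef) :
    ((hB.posSemidef.sqrt)⁻¹ * A * (hB.posSemidef.sqrt)⁻¹).PosSemidef := by
  have := hA.mul_mul_conjTranspose_same ((hB.posSemidef.sqrt)⁻¹)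
  rwa [(sqrt_inv_herm hB)] at this

/-- Transfer: quadratic form domination implies spectral norm bound on whitened matrix. -/
lemma transfer_le {A : Matrix (Fin d) (Fin d) ℝ} (hA : A.PosSemidef) {c : ℝ} (hc : 0 ≤ c)
    (h : ∀ y, y ⬝ᵥ (A *ᵥ y) ≤ c * (y ⬝ᵥ (B *ᵥ y))) :
    matSpectralNorm ((hB.posSemidef.sqrt)⁻¹ * A * (hB.posSemidef.sqrt)⁻¹) ≤ c := by
  refine spectralNorm_le_of_qf (conj_psd hB hA) hc (fun x => ?_)
  rw [qf_conj hB]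
  refine (h _).trans ?_
  rw [qf_B_eq hB, Matrix.mulVec_mulVec, sqrt_mul_sqrt_inv hB, Matrix.one_mulVec]

lemma transfer_from_le {A : Matrix (Fin d) (Fin d) ℝ} {c : ℝ}
    (h : matSpectralNorm ((hB.posSemidef.sqrt)⁻¹ * A * (hB.posSemidef.sqrt)⁻¹) ≤ c)
    (y : Fin d → ℝ) : y ⬝ᵥ (A *ᵥ y) ≤ c * (y ⬝ᵥ (B *ᵥ y)) := by
  set S := hB.posSemidef.sqrt
  set x := S *ᵥ y with hx
  have h1 : S⁻¹ *ᵥ x = y := by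
    rw [hx, Matrix.mulVec_mulVec, sqrt_inv_mul_sqrt hB, Matrix.one_mulVec]
  have h2 : y ⬝ᵥ (A *ᵥ y) = x ⬝ᵥ ((S⁻¹ * A * S⁻¹) *ᵥ x) := by
    rw [qf_conj hB, h1]
  have h3 : x ⬝ᵥ ((S⁻¹ * A * S⁻¹) *ᵥ x) ≤ matSpectralNorm (S⁻¹ * A * S⁻¹) * (x ⬝ᵥ x) :=
    (le_abs_self _).trans (abs_qf_le' _ x)
  have h4 : y ⬝ᵥ (B *ᵥ y) = x ⬝ᵥ x := qf_B_eq hB y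
  rw [h2, h4]
  refine h3.trans ?_
  exact mul_le_mul_of_nonneg_right h (dp_self_nonneg x)

lemma transfer_ge {A : Matrix (Fin d) (Fin d) ℝ} {c : ℝ} {y : Fin d → ℝ} (hy : y ≠ 0)
    (h : c * (y ⬝ᵥ (B *ᵥ y)) ≤ y ⬝ᵥ (A *ᵥ y)) :
    c ≤ matSpectralNorm ((hB.posSemidef.sqrt)⁻¹ * A * (hB.posSemidef.sqrt)⁻¹) := by
  set S := hB.posSemidef.sqrt
  set x := S *ᵥ y with hx
  have h1 : S⁻¹ *ᵥ x = y := by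
    rw [hx, Matrix.mulVec_mulVec, sqrt_inv_mul_sqrt hB, Matrix.one_mulVec]
  have hx0 : x ≠ 0 := by
    intro h0
    rw [h0, Matrix.mulVec_zero] at h1
    exact hy h1.symm
  refine le_spectralNorm_of_qf hx0 ?_
  rw [qf_conj hB, h1, ← qf_B_eq hB]
  exact h

lemma transfer_from_ge [Nonempty (Fin d)] {A : Matrix (Fin d) (Fin d) ℝ} (hA : A.PosSemidef)
    {c : ℝ} (h : c ≤ matSpectralNorm ((hB.posSemidef.sqrt)⁻¹ * A * (hB.posSemidef.sqrt)⁻¹)) :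
    ∃ y : Fin d → ℝ, y ≠ 0 ∧ c * (y ⬝ᵥ (B *ᵥ y)) ≤ y ⬝ᵥ (A *ᵥ y) := by
  set S := hB.posSemidef.sqrt
  obtain ⟨v, hv0, hv⟩ := exists_top_eig (conj_psd hB hA)
  set y := S⁻¹ *ᵥ v with hy
  have h1 : S *ᵥ y = v := by
    rw [hy, Matrix.mulVec_mulVec, sqrt_mul_sqrt_inv hB, Matrix.one_mulVec]
  have hy0 : y ≠ 0 := by
    intro h0
    rw [h0, Matrix.mulVec_zero] at h1
    exact hv0 h1.symm
  refine ⟨y, hy0, ?_⟩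
  have h2 : y ⬝ᵥ (A *ᵥ y) = v ⬝ᵥ ((S⁻¹ * A * S⁻¹) *ᵥ v) := by
    rw [qf_conj hB, hy]
  have h4 : y ⬝ᵥ (B *ᵥ y) = v ⬝ᵥ v := by rw [qf_B_eq hB y, h1]
  rw [h2, h4]
  refine le_trans ?_ hv
  exact mul_le_mul_of_nonneg_right h (dp_self_nonneg v)

end Sqrt

end DSEC


open DSEC

/-- **Distribution-shift error checking (matrix core of Lemma 9 in the paper).**
Suppose `ε ≤ (1/2) β λ_r`, `Sig` is symmetric positive definite with
`λ_min(Sig) ≥ λ_r / k`, `M₁` is symmetric with `‖M₁ − Sig‖₂ ≤ (1/2) λ_min(Sig)`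
(hence `M₁` is positive definite), and `M₂`, `Sighat` are positive semidefinite with
`‖M₂ − Sighat‖₂ ≤ ε`. Then the empirical check on `‖Sig^{-1/2} Sighat Sig^{-1/2}‖₂`
certifies `‖M₁^{-1/2} M₂ M₁^{-1/2}‖₂` up to constant factors:
(i) if `‖Sig^{-1/2} Sighat Sig^{-1/2}‖₂ ≤ β k` then `‖M₁^{-1/2} M₂ M₁^{-1/2}‖₂ ≤ 3 β k`;
(ii) if `‖Sig^{-1/2} Sighat Sig^{-1/2}‖₂ ≥ β k` then
`‖M₁^{-1/2} M₂ M₁^{-1/2}‖₂ ≥ (1/4) β k`. -/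
theorem distribution_shift_error_checking
    (d : ℕ) (β lamr ε : ℝ) (hβ : 0 < β) (hlamr : 0 < lamr) (k : ℕ) (hk : 1 ≤ k)
    (hε : ε ≤ (1 / 2) * β * lamr)
    (Sig M₁ M₂ Sighat : Matrix (Fin d) (Fin d) ℝ)
    (hSig : Sig.PosDef)
    (hSigmin : lamr / k ≤ ⨅ i, hSig.1.eigenvalues i)
    (hM₁herm : M₁.IsHermitian)
    (hM₁close : matSpectralNorm (M₁ - Sig) ≤ (1 / 2) * ⨅ i, hSig.1.eigenvalues i)
    (hM₂ : M₂.PosSemidef) (hSighat : Sighat.PosSemidef)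
    (hclose : matSpectralNorm (M₂ - Sighat) ≤ ε) :
    ∃ hM₁ : M₁.PosDef,
      (matSpectralNorm ((hSig.posSemidef.sqrt)⁻¹ * Sighat * (hSig.posSemidef.sqrt)⁻¹)
          ≤ β * k →
        matSpectralNorm ((hM₁.posSemidef.sqrt)⁻¹ * M₂ * (hM₁.posSemidef.sqrt)⁻¹)
          ≤ 3 * β * k) ∧
      (β * k ≤
          matSpectralNorm ((hSig.posSemidef.sqrt)⁻¹ * Sighat * (hSig.posSemidef.sqrt)⁻¹) →
        (1 / 4) * β * k ≤
          matSpectralNorm ((hM₁.posSemidef.sqrt)⁻¹ * M₂ * (hM₁.posSemidef.sqrt)⁻¹)) := by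
  classical
  have hk0 : (0:ℝ) < (k:ℝ) := by
    have : 0 < k := hk
    exact_mod_cast this
  have hβk : (0:ℝ) < β * k := mul_pos hβ hk0
  set lm := ⨅ i, hSig.1.eigenvalues i with hlm_def
  haveI hne : Nonempty (Fin d) := by
    by_contra h
    haveI hie : IsEmpty (Fin d) := not_nonempty_iff.mp h
    rw [hlm_def, Real.iInf_of_isEmpty] at hSigmin
    have := div_pos hlamr hk0
    linarith
  have hlm : 0 < lm := lt_of_lt_of_le (div_pos hlamr hk0) hSigmin
  have hlm_le : ∀ i, lm ≤ hSig.1.eigenvalues i := fun i =>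
    ciInf_le (Finite.bddBelow_range _) i
  have hlk : lamr ≤ lm * k := (div_le_iff₀ hk0).mp hSigmin
  -- quadratic-form facts
  have F1 : ∀ x : Fin d → ℝ, lm * (x ⬝ᵥ x) ≤ x ⬝ᵥ (Sig *ᵥ x) := qf_lb_eig hSig.1 hlm_le
  have F2 : ∀ x : Fin d → ℝ, |x ⬝ᵥ ((M₁ - Sig) *ᵥ x)| ≤ (1/2 * lm) * (x ⬝ᵥ x) := fun x =>
    (abs_qf_le' _ x).trans (mul_le_mul_of_nonneg_right hM₁close (dp_self_nonneg x))
  have Fsplit : ∀ x : Fin d → ℝ,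
      x ⬝ᵥ (M₁ *ᵥ x) = x ⬝ᵥ (Sig *ᵥ x) + x ⬝ᵥ ((M₁ - Sig) *ᵥ x) := by
    intro x
    rw [Matrix.sub_mulVec, dotProduct_sub]
    ring
  have qfM₁_ge : ∀ x : Fin d → ℝ, (1/2) * (x ⬝ᵥ (Sig *ᵥ x)) ≤ x ⬝ᵥ (M₁ *ᵥ x) := by
    intro x
    have h1 := F1 x
    have h2 := (abs_le.mp (F2 x)).1
    have h3 := Fsplit x
    nlinarith [dp_self_nonneg x]
  have qfM₁_le : ∀ x : Fin d → ℝ, x ⬝ᵥ (M₁ *ᵥ x) ≤ (3/2) * (x ⬝ᵥ (Sig *ᵥ x)) := by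
    intro x
    have h1 := F1 x
    have h2 := (abs_le.mp (F2 x)).2
    have h3 := Fsplit x
    nlinarith [dp_self_nonneg x]
  have hM₁pd : M₁.PosDef := by
    refine Matrix.PosDef.of_dotProduct_mulVec_pos hM₁herm (fun x hx => ?_)
    have h1 := F1 x
    have h2 := qfM₁_ge x
    have hs := dp_self_pos hx
    have hpos : 0 < x ⬝ᵥ (M₁ *ᵥ x) := by nlinarith
    rwa [star_trivial]
  have hε0 : (0:ℝ) ≤ ε :=
    le_trans (show (0:ℝ) ≤ matSpectralNorm (M₂ - Sighat) from norm_nonneg _) hclose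
  have F4 : ∀ x : Fin d → ℝ, |x ⬝ᵥ ((M₂ - Sighat) *ᵥ x)| ≤ ε * (x ⬝ᵥ x) := fun x =>
    (abs_qf_le' _ x).trans (mul_le_mul_of_nonneg_right hclose (dp_self_nonneg x))
  have hεlm : ε ≤ 1/2 * (β * k) * lm := by
    nlinarith [mul_le_mul_of_nonneg_left hlk hβ.le]
  refine ⟨hM₁pd, fun h => ?_, fun h => ?_⟩
  · -- upper bound
    have G2 : ∀ y : Fin d → ℝ, y ⬝ᵥ (M₂ *ᵥ y) ≤ (3 * β * k) * (y ⬝ᵥ (M₁ *ᵥ y)) := by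
      intro y
      have g1 := transfer_from_le hSig h y
      have g2 := (abs_le.mp (F4 y)).2
      have gsplit : y ⬝ᵥ (M₂ *ᵥ y) = y ⬝ᵥ (Sighat *ᵥ y) + y ⬝ᵥ ((M₂ - Sighat) *ᵥ y) := by
        rw [Matrix.sub_mulVec, dotProduct_sub]; ring
      have g3 := F1 y
      have g4 := qfM₁_ge y
      have gs := dp_self_nonneg y
      have e1 : ε * (y ⬝ᵥ y) ≤ (1/2 * (β * k) * lm) * (y ⬝ᵥ y) :=
        mul_le_mul_of_nonneg_right hεlm gs
      have e2 : (1/2 * (β * k)) * (lm * (y ⬝ᵥ y)) ≤ (1/2 * (β * k)) * (y ⬝ᵥ (Sig *ᵥ y)) :=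
        mul_le_mul_of_nonneg_left g3 (by positivity)
      have e3 : (3 * (β * k)) * ((1/2) * (y ⬝ᵥ (Sig *ᵥ y))) ≤ (3 * (β * k)) * (y ⬝ᵥ (M₁ *ᵥ y)) :=
        mul_le_mul_of_nonneg_left g4 (by positivity)
      linarith
    exact transfer_le hM₁pd hM₂ (by positivity) G2
  · -- lower bound
    obtain ⟨y, hy0, hy⟩ := transfer_from_ge hSig hSighat h
    refine transfer_ge hM₁pd hy0 ?_
    have g2 := (abs_le.mp (F4 y)).1
    have gsplit : y ⬝ᵥ (M₂ *ᵥ y) = y ⬝ᵥ (Sighat *ᵥ y) + y ⬝ᵥ ((M₂ - Sighat) *ᵥ y) := by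
      rw [Matrix.sub_mulVec, dotProduct_sub]; ring
    have g3 := F1 y
    have g5 := qfM₁_le y
    have gs := dp_self_nonneg y
    have e1 : ε * (y ⬝ᵥ y) ≤ (1/2 * (β * k) * lm) * (y ⬝ᵥ y) :=
      mul_le_mul_of_nonneg_right hεlm gs
    have e2 : (1/2 * (β * k)) * (lm * (y ⬝ᵥ y)) ≤ (1/2 * (β * k)) * (y ⬝ᵥ (Sig *ᵥ y)) :=
      mul_le_mul_of_nonneg_left g3 (by positivity)
    have e5 : (1/4 * (β * k)) * (y ⬝ᵥ (M₁ *ᵥ y)) ≤ (1/4 * (β * k)) * ((3/2) * (y ⬝ᵥ (Sig *ᵥ y))) :=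
      mul_le_mul_of_nonneg_left g5 (by positivity)
    have ha : 0 ≤ y ⬝ᵥ (Sig *ᵥ y) := le_trans (mul_nonneg hlm.le gs) g3
    have hu : 0 ≤ (β * (k:ℝ)) * (y ⬝ᵥ (Sig *ᵥ y)) := mul_nonneg hβk.le ha
    linarith
end
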